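/- arXiv:2102.11782 — 10 statements merged into one kernel-verified Lean document; each statement's English description precedes it below -/
import Mathlib

section
/- Let R ⊆ (Fin k → Bool) be a Boolean relation that is essentially positive but not strictly essentially positive, and that is neither 0-valid nor 1-valid. Then the equality relation is definable from R by variable identification and existential quantification: there exists a map σ : Fin k → Fin 4 such that for all a, b : Bool, a = b holds if and only if there exist t, f : Bool with the assignment (fun i => ![a, b, t, f] (σ i)) belonging to R. -/
/-- `R` is 0-valid if the constant-false tuple belongs to it. -/
def ZeroValid {k : ℕ} (R : Set (Fin k → Bool)) : Prop := (fun _ => false) ∈ R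

/-- `R` is 1-valid if the constant-true tuple belongs to it. -/
def OneValid {k : ℕ} (R : Set (Fin k → Bool)) : Prop := (fun _ => true) ∈ R

/-- `R` is essentially positive: definable by negative unit literals,
equalities, and positive clauses. -/
def EssPos {k : ℕ} (R : Set (Fin k → Bool)) : Prop :=
  ∃ (N : Finset (Fin k)) (E : Finset (Fin k × Fin k)) (P : Finset (Finset (Fin k))),
    (∀ C ∈ P, C.Nonempty) ∧
    ∀ m : Fin k → Bool, m ∈ R ↔
      ((∀ i ∈ N, m i = false) ∧ (∀ p ∈ E, m p.1 = m p.2) ∧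
        (∀ C ∈ P, ∃ i ∈ C, m i = true))

/-- `R` is strictly essentially positive: definable by negative unit literals
and positive clauses only (no equalities). -/
def StrictEssPos {k : ℕ} (R : Set (Fin k → Bool)) : Prop :=
  ∃ (N : Finset (Fin k)) (P : Finset (Finset (Fin k))),
    (∀ C ∈ P, C.Nonempty) ∧
    ∀ m : Fin k → Bool, m ∈ R ↔
      ((∀ i ∈ N, m i = false) ∧ (∀ C ∈ P, ∃ i ∈ C, m i = true))

/-- Equality is definable from such an `R` by variable identification and
existential quantification. -/
theorem stmt_3 {k : ℕ} (R : Set (Fin k → Bool))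
    (hep : EssPos R) (hnsep : ¬ StrictEssPos R)
    (h0 : ¬ ZeroValid R) (h1 : ¬ OneValid R) :
    ∃ σ : Fin k → Fin 4, ∀ a b : Bool,
      (a = b ↔ ∃ t f : Bool, (fun i => ![a, b, t, f] (σ i)) ∈ R) := by
  classical
  obtain ⟨N, E, P, hPne, hR⟩ := hep
  set e : Fin k → Fin k → Prop := fun i j => (i, j) ∈ E with he
  have hconst : ∀ (m : Fin k → Bool), (∀ p ∈ E, m p.1 = m p.2) →
      ∀ {x y}, Relation.EqvGen e x y → m x = m y := by
    intro m hm x y h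
    induction h with
    | rel x y hxy => exact hm (x, y) hxy
    | refl => rfl
    | symm _ _ _ ih => exact ih.symm
    | trans _ _ _ _ _ ih1 ih2 => exact ih1.trans ih2
  set Z : Fin k → Prop := fun i => ∃ n ∈ N, Relation.EqvGen e i n with hZdef
  have hZclosed : ∀ {x y}, Relation.EqvGen e x y → Z x → Z y := by
    rintro x y hxy ⟨n, hn, hxn⟩
    exact ⟨n, hn, (Relation.EqvGen.symm _ _ hxy).trans _ _ _ hxn⟩
  have hNZ : ∀ i ∈ N, Z i := fun i hi => ⟨i, hi, Relation.EqvGen.refl i⟩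
  have hmZ : ∀ m ∈ R, ∀ i, Z i → m i = false := by
    rintro m hm i ⟨n, hn, hin⟩
    have h := (hR m).1 hm
    exact (hconst m h.2.1 hin).trans (h.1 n hn)
  have hbad : ∃ i j, Relation.EqvGen e i j ∧ i ≠ j ∧ ¬ Z i ∧
      ¬ ∃ C ∈ P, ∀ x ∈ C, ¬ Z x → Relation.EqvGen e x i := by
    by_contra hb
    push_neg at hb
    apply hnsep
    refine ⟨Finset.univ.filter Z,
      P ∪ (Finset.univ.filter (fun x => ¬ Z x ∧ ∃ C ∈ P, ∀ y ∈ C, ¬ Z y →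
        Relation.EqvGen e y x)).image (fun x => {x}), ?_, ?_⟩
    · intro C hC
      rcases Finset.mem_union.1 hC with h | h
      · exact hPne C h
      · obtain ⟨x, _, rfl⟩ := Finset.mem_image.1 h
        exact ⟨x, Finset.mem_singleton_self x⟩
    · intro m
      constructor
      · intro hm
        refine ⟨fun i hi => hmZ m hm i ((Finset.mem_filter.1 hi).2), ?_⟩
        intro C hC
        rcases Finset.mem_union.1 hC with h | h
        · exact ((hR m).1 hm).2.2 C h
        · obtain ⟨x, hx, rfl⟩ := Finset.mem_image.1 h
          obtain ⟨hxZ, C', hC', hfor⟩ := (Finset.mem_filter.1 hx).2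
          obtain ⟨y, hy, hyt⟩ := ((hR m).1 hm).2.2 C' hC'
          have hyZ : ¬ Z y := by
            intro hZy
            rw [hmZ m hm y hZy] at hyt; exact absurd hyt (by simp)
          exact ⟨x, Finset.mem_singleton_self x,
            (hconst m ((hR m).1 hm).2.1 (hfor y hy hyZ)).symm.trans hyt⟩
      · rintro ⟨hmN, hmP⟩
        refine (hR m).2 ⟨?_, ?_, ?_⟩
        · intro i hi
          exact hmN i (Finset.mem_filter.2 ⟨Finset.mem_univ i, hNZ i hi⟩)
        · rintro ⟨p, q⟩ hpq
          have hepq : Relation.EqvGen e p q := Relation.EqvGen.rel p q hpq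
          by_cases hZp : Z p
          · have hZq : Z q := hZclosed hepq hZp
            rw [hmN p (Finset.mem_filter.2 ⟨Finset.mem_univ p, hZp⟩),
              hmN q (Finset.mem_filter.2 ⟨Finset.mem_univ q, hZq⟩)]
          · have hZq : ¬ Z q := fun h => hZp (hZclosed (Relation.EqvGen.symm _ _ hepq) h)
            by_cases hpq' : p = q
            · rw [hpq']
            · have hfp := hb p q hepq hpq' hZp
              have hfq := hb q p (Relation.EqvGen.symm _ _ hepq) (Ne.symm hpq') hZq
              have htp : m p = true := by
                obtain ⟨i, hi, hit⟩ := hmP {p} (Finset.mem_union_right _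
                  (Finset.mem_image.2 ⟨p, Finset.mem_filter.2
                    ⟨Finset.mem_univ p, hZp, hfp⟩, rfl⟩))
                rw [Finset.mem_singleton] at hi
                rwa [hi] at hit
              have htq : m q = true := by
                obtain ⟨i, hi, hit⟩ := hmP {q} (Finset.mem_union_right _
                  (Finset.mem_image.2 ⟨q, Finset.mem_filter.2
                    ⟨Finset.mem_univ q, hZq, hfq⟩, rfl⟩))
                rw [Finset.mem_singleton] at hi
                rwa [hi] at hit
              rw [htp, htq]
        · intro C hC
          exact hmP C (Finset.mem_union_left _ hC)
  obtain ⟨i0, j0, hij, hne, hZi0, hnf⟩ := hbad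
  have hZj0 : ¬ Z j0 := fun h => hZi0 (hZclosed (Relation.EqvGen.symm _ _ hij) h)
  push_neg at hnf
  set σ : Fin k → Fin 4 := fun x =>
    if Z x then 3 else if x = i0 then 0 else if Relation.EqvGen e x i0 then 1 else 2 with hσ
  refine ⟨σ, ?_⟩
  intro a b
  constructor
  · rintro rfl
    refine ⟨true, false, (hR _).2 ⟨?_, ?_, ?_⟩⟩
    · intro i hi
      have : σ i = 3 := by simp [hσ, hNZ i hi]
      simp [this]
    · have hval : ∀ x, ¬ Z x →
          (![a, a, true, false] (σ x)) = (if Relation.EqvGen e x i0 then a else true) := by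
        intro x hx
        by_cases h0' : x = i0
        · subst h0'
          simp [hσ, hx, Relation.EqvGen.refl]
        · by_cases h1' : Relation.EqvGen e x i0
          · simp [hσ, hx, h0', h1']
          · simp [hσ, hx, h0', h1']
      rintro ⟨p, q⟩ hpq
      have hepq : Relation.EqvGen e p q := Relation.EqvGen.rel p q hpq
      by_cases hZp : Z p
      · have hZq : Z q := hZclosed hepq hZp
        simp only []
        have h3p : σ p = 3 := by simp [hσ, hZp]
        have h3q : σ q = 3 := by simp [hσ, hZq]
        simp [h3p, h3q]
      · have hZq : ¬ Z q := fun h => hZp (hZclosed (Relation.EqvGen.symm _ _ hepq) h)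
        have hiff : Relation.EqvGen e p i0 ↔ Relation.EqvGen e q i0 :=
          ⟨fun h => (Relation.EqvGen.symm _ _ hepq).trans _ _ _ h,
           fun h => hepq.trans _ _ _ h⟩
        simp only [hval p hZp, hval q hZq, hiff]
    · intro C hC
      obtain ⟨x, hx, hxZ, hxe⟩ := hnf C hC
      refine ⟨x, hx, ?_⟩
      have hxi : x ≠ i0 := fun h => hxe (h ▸ Relation.EqvGen.refl x)
      have : σ x = 2 := by simp [hσ, hxZ, hxe, hxi]
      simp [this]
  · rintro ⟨t, f, hm⟩
    have hc := hconst (fun i => ![a, b, t, f] (σ i)) ((hR _).1 hm).2.1 hij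
    have hσi : σ i0 = 0 := by simp [hσ, hZi0]
    have hσj : σ j0 = 1 := by
      simp [hσ, hZj0, Ne.symm hne, Relation.EqvGen.symm _ _ hij]
    simp only [hσi, hσj] at hc
    simpa using hc
end

section
/- Let Φ be a consistent set of terms over V and let l be a literal. Then Φ ⊨ l if and only if some term t ∈ Φ contains l. -/
/-- A literal over `V`: `Sum.inl x` is the positive literal `x`,
`Sum.inr x` is the negative literal `¬x`. -/
abbrev Lit (V : Type) := V ⊕ V

/-- A term is a finite set of literals. -/
abbrev Term (V : Type) := Finset (Lit V)

/-- An assignment satisfies a literal. -/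
def satLit {V : Type} (σ : V → Bool) : Lit V → Prop
  | Sum.inl x => σ x = true
  | Sum.inr x => σ x = false

/-- An assignment satisfies a term if it satisfies every literal in it. -/
def satTerm {V : Type} (σ : V → Bool) (t : Term V) : Prop := ∀ l ∈ t, satLit σ l

/-- A set of terms is consistent if some assignment satisfies all of its members. -/
def ConsistentT {V : Type} (Φ : Set (Term V)) : Prop := ∃ σ, ∀ t ∈ Φ, satTerm σ t

/-- `Φ ⊨ l`: every assignment satisfying all terms of `Φ` satisfies `l`. -/
def EntailsLit {V : Type} (Φ : Set (Term V)) (l : Lit V) : Prop :=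
  ∀ σ, (∀ t ∈ Φ, satTerm σ t) → satLit σ l

/-- A consistent set of terms entails a literal iff some of its terms contains it. -/
theorem stmt_4 {V : Type} (Φ : Set (Term V)) (l : Lit V) (hcons : ConsistentT Φ) :
    EntailsLit Φ l ↔ ∃ t ∈ Φ, l ∈ t := by
  classical
  constructor
  · intro hent
    by_contra hno
    push_neg at hno
    obtain ⟨σ, hσ⟩ := hcons
    cases l with
    | inl x =>
      set σ' : V → Bool := fun y => if y = x then false else σ y with hσ'
      have hsat : ∀ t ∈ Φ, satTerm σ' t := by
        intro t ht l' hl'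
        have hne : l' ≠ Sum.inl x := fun h => hno t ht (h ▸ hl')
        cases l' with
        | inl y =>
          have hy : y ≠ x := fun h => hne (by rw [h])
          show σ' y = true
          simp only [hσ', hy, if_false]
          exact hσ t ht _ hl'
        | inr y =>
          show σ' y = false
          by_cases hy : y = x
          · simp [hσ', hy]
          · simp only [hσ', hy, if_false]
            exact hσ t ht _ hl'
      have := hent σ' hsat
      simp [satLit, hσ'] at this
    | inr x =>
      set σ' : V → Bool := fun y => if y = x then true else σ y with hσ'
      have hsat : ∀ t ∈ Φ, satTerm σ' t := by
        intro t ht l' hl'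
        have hne : l' ≠ Sum.inr x := fun h => hno t ht (h ▸ hl')
        cases l' with
        | inl y =>
          show σ' y = true
          by_cases hy : y = x
          · simp [hσ', hy]
          · simp only [hσ', hy, if_false]
            exact hσ t ht _ hl'
        | inr y =>
          have hy : y ≠ x := fun h => hne (by rw [h])
          show σ' y = false
          simp only [hσ', hy, if_false]
          exact hσ t ht _ hl'
      have := hent σ' hsat
      simp [satLit, hσ'] at this
  · rintro ⟨t, ht, hlt⟩ σ hσ
    exact hσ t ht l hlt
end

section
/- Let Δ be a set of terms over V and let l_1, …, l_k be literals (the literals of a claim that is a conjunction of k literals). If there exists a consistent subset Φ ⊆ Δ with Φ ⊨ l_i for every i = 1, …, k, then there exists a consistent subset Φ' ⊆ Φ with |Φ'| ≤ k and Φ' ⊨ l_i for every i = 1, …, k. In particular, such a claim has a consistent entailing subset in Δ if and only if it has one of cardinality at most k. -/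
/-- If a consistent set entails a literal, the literal occurs in some member term. -/
lemma lit_mem_of_entails {V : Type} {Φ : Set (Term V)} (hcons : ConsistentT Φ)
    {l : Lit V} (h : EntailsLit Φ l) : ∃ t ∈ Φ, l ∈ t := by
  classical
  by_contra hno
  push_neg at hno
  obtain ⟨σ, hσ⟩ := hcons
  cases l with
  | inl x =>
    set σ' : V → Bool := Function.update σ x false with hσ'
    have hsat : ∀ t ∈ Φ, satTerm σ' t := by
      intro t ht m hm
      cases m with
      | inl y =>
        have hyx : y ≠ x := by
          rintro rfl; exact hno t ht hm
        have : σ' y = σ y := Function.update_of_ne hyx _ _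
        simpa [satLit, this] using hσ t ht _ hm
      | inr y =>
        by_cases hyx : y = x
        · subst hyx
          simp [satLit, hσ', Function.update_self]
        · have : σ' y = σ y := Function.update_of_ne hyx _ _
          simpa [satLit, this] using hσ t ht _ hm
    have := h σ' hsat
    simp [satLit, hσ', Function.update_self] at this
  | inr x =>
    set σ' : V → Bool := Function.update σ x true with hσ'
    have hsat : ∀ t ∈ Φ, satTerm σ' t := by
      intro t ht m hm
      cases m with
      | inr y =>
        have hyx : y ≠ x := by
          rintro rfl; exact hno t ht hm
        have : σ' y = σ y := Function.update_of_ne hyx _ _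
        simpa [satLit, this] using hσ t ht _ hm
      | inl y =>
        by_cases hyx : y = x
        · subst hyx
          simp [satLit, hσ', Function.update_self]
        · have : σ' y = σ y := Function.update_of_ne hyx _ _
          simpa [satLit, this] using hσ t ht _ hm
    have := h σ' hsat
    simp [satLit, hσ', Function.update_self] at this

/-- Main reduction: a small consistent entailing subset exists. -/
lemma aux_small_subset_5 {V : Type} (k : ℕ) (l : Fin k → Lit V)
    (Φ : Set (Term V)) (hcons : ConsistentT Φ)
    (hent : ∀ i, EntailsLit Φ (l i)) :
    ∃ Φ' : Finset (Term V), (↑Φ' : Set (Term V)) ⊆ Φ ∧ Φ'.card ≤ k ∧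
      ConsistentT (↑Φ' : Set (Term V)) ∧
      ∀ i, EntailsLit (↑Φ' : Set (Term V)) (l i) := by
  classical
  have hpick : ∀ i : Fin k, ∃ t ∈ Φ, l i ∈ t := fun i =>
    lit_mem_of_entails hcons (hent i)
  choose t htΦ htmem using hpick
  refine ⟨Finset.image t Finset.univ, ?_, ?_, ?_, ?_⟩
  · intro s hs
    simp only [Finset.coe_image, Set.mem_image] at hs
    obtain ⟨i, _, rfl⟩ := hs
    exact htΦ i
  · calc (Finset.image t Finset.univ).card ≤ Finset.univ.card :=
      Finset.card_image_le
    _ = k := by simp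
  · obtain ⟨σ, hσ⟩ := hcons
    exact ⟨σ, fun s hs => by
      simp only [Finset.coe_image, Set.mem_image] at hs
      obtain ⟨i, _, rfl⟩ := hs
      exact hσ _ (htΦ i)⟩
  · intro i σ hσ
    have : satTerm σ (t i) := hσ (t i) (by simp)
    exact this _ (htmem i)

/-- If a consistent subset of `Δ` entails each of the literals `l 1, …, l k`,
then there is such a subset of cardinality at most `k`; in particular, the claim
has a consistent entailing subset in `Δ` iff it has one of cardinality at most `k`. -/
theorem stmt_5 {V : Type} (Δ : Set (Term V)) (k : ℕ) (l : Fin k → Lit V)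
    (Φ : Set (Term V)) (hΦΔ : Φ ⊆ Δ) (hcons : ConsistentT Φ)
    (hent : ∀ i, EntailsLit Φ (l i)) :
    (∃ Φ' : Finset (Term V), (↑Φ' : Set (Term V)) ⊆ Φ ∧ Φ'.card ≤ k ∧
      ConsistentT (↑Φ' : Set (Term V)) ∧
      ∀ i, EntailsLit (↑Φ' : Set (Term V)) (l i)) ∧
    ((∃ Ψ : Set (Term V), Ψ ⊆ Δ ∧ ConsistentT Ψ ∧ ∀ i, EntailsLit Ψ (l i)) ↔
      (∃ Ψ : Finset (Term V), (↑Ψ : Set (Term V)) ⊆ Δ ∧ Ψ.card ≤ k ∧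
        ConsistentT (↑Ψ : Set (Term V)) ∧
        ∀ i, EntailsLit (↑Ψ : Set (Term V)) (l i))) := by
  constructor
  · exact aux_small_subset_5 k l Φ hcons hent
  · constructor
    · rintro ⟨Ψ, hΨΔ, hΨc, hΨe⟩
      obtain ⟨Φ', h1, h2, h3, h4⟩ := aux_small_subset_5 k l Ψ hΨc hΨe
      exact ⟨Φ', h1.trans hΨΔ, h2, h3, h4⟩
    · rintro ⟨Ψ, hΨΔ, _, hΨc, hΨe⟩
      exact ⟨↑Ψ, hΨΔ, hΨc, hΨe⟩
end

section
/- Let Φ be a set of terms over V. If every subset of Φ of cardinality at most 2 is consistent (in particular, every term and every pair of terms of Φ is consistent), then Φ is consistent. Contrapositively, if Φ is inconsistent then it contains an inconsistent subset of cardinality at most 2. -/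
/-- If every subset of `Φ` of cardinality at most 2 is consistent, then `Φ` is
consistent; contrapositively, an inconsistent `Φ` contains an inconsistent
subset of cardinality at most 2. -/
theorem stmt_6 {V : Type} (Φ : Set (Term V)) :
    ((∀ S : Finset (Term V), (↑S : Set (Term V)) ⊆ Φ → S.card ≤ 2 →
        ConsistentT (↑S : Set (Term V))) → ConsistentT Φ) ∧
    (¬ ConsistentT Φ → ∃ S : Finset (Term V), (↑S : Set (Term V)) ⊆ Φ ∧
        S.card ≤ 2 ∧ ¬ ConsistentT (↑S : Set (Term V))) := by
  classical
  have main : (∀ S : Finset (Term V), (↑S : Set (Term V)) ⊆ Φ → S.card ≤ 2 →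
      ConsistentT (↑S : Set (Term V))) → ConsistentT Φ := by
    intro h
    refine ⟨fun x => if ∃ t ∈ Φ, Sum.inl x ∈ t then true else false, ?_⟩
    intro t ht l hl
    match l with
    | Sum.inl x =>
      simp only [satLit]
      rw [if_pos ⟨t, ht, hl⟩]
    | Sum.inr x =>
      simp only [satLit]
      rw [if_neg]
      rintro ⟨t', ht', hx⟩
      have hsub : (↑({t, t'} : Finset (Term V)) : Set (Term V)) ⊆ Φ := by
        intro s hs
        simp only [Finset.coe_insert, Finset.coe_singleton, Set.mem_insert_iff,
          Set.mem_singleton_iff] at hs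
        rcases hs with rfl | rfl <;> assumption
      have hcard : ({t, t'} : Finset (Term V)).card ≤ 2 := by
        apply le_trans (Finset.card_insert_le _ _); simp
      obtain ⟨τ, hτ⟩ := h {t, t'} hsub hcard
      have h1 : τ x = false := hτ t (by simp) _ hl
      have h2 : τ x = true := hτ t' (by simp) _ hx
      rw [h1] at h2; exact Bool.false_ne_true h2
  refine ⟨main, ?_⟩
  intro hnc
  by_contra hno
  push_neg at hno
  exact hnc (main fun S hS hc => by
    by_contra hbad
    exact hbad (hno S hS hc))
end

section
/- Let Δ be a set of terms over V and let l_1, …, l_k be literals. For each i = 1, …, k, let L_i be the set of terms t ∈ Δ such that l_i ∈ t and t contains the complementary literal of no l_j (j = 1, …, k), where the complementary literal of a positive literal x is ¬x and of ¬x is x. Then there exists a consistent subset Φ ⊆ Δ with Φ ⊨ l_i for every i if and only if there exists a choice of terms t_1 ∈ L_1, …, t_k ∈ L_k such that every pair {t_i, t_j} (1 ≤ i, j ≤ k) is consistent. -/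
/-- The complementary literal. -/
def complLit {V : Type} : Lit V → Lit V
  | Sum.inl x => Sum.inr x
  | Sum.inr x => Sum.inl x

lemma sat_compl_false {V : Type} (σ : V → Bool) (m : Lit V) :
    satLit σ m → satLit σ (complLit m) → False := by
  cases m <;> simp [satLit, complLit]

/-- There is a consistent subset of `Δ` entailing each literal `l i` iff one can
choose, for each `i`, a term `t i ∈ Δ` containing `l i` and containing the
complement of no `l j`, such that all pairs `{t i, t j}` are consistent. -/
theorem stmt_7 {V : Type} (Δ : Set (Term V)) (k : ℕ) (l : Fin k → Lit V) :
    (∃ Φ : Set (Term V), Φ ⊆ Δ ∧ ConsistentT Φ ∧ ∀ i, EntailsLit Φ (l i)) ↔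
    (∃ t : Fin k → Term V,
      (∀ i, t i ∈ Δ ∧ l i ∈ t i ∧ ∀ j, complLit (l j) ∉ t i) ∧
      ∀ i j, ConsistentT {t i, t j}) := by
  classical
  constructor
  · rintro ⟨Φ, hsub, ⟨σ, hσ⟩, hent⟩
    have hsat : ∀ i, satLit σ (l i) := fun i => hent i σ hσ
    have hnc : ∀ (j : Fin k) t, t ∈ Φ → complLit (l j) ∉ t := by
      intro j t ht hmem
      exact sat_compl_false σ (l j) (hsat j) (hσ t ht _ hmem)
    have hex : ∀ i, ∃ t ∈ Φ, l i ∈ t := by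
      intro i
      by_contra h
      push_neg at h
      set v : V := Sum.elim id id (l i) with hv
      set b : Bool := (match l i with | Sum.inl _ => false | Sum.inr _ => true) with hb
      set σ' : V → Bool := fun w => if w = v then b else σ w with hσ'
      have hΦ : ∀ t ∈ Φ, satTerm σ' t := by
        intro t ht m hm
        have hne : Sum.elim id id m ≠ v := by
          intro heq
          rcases m with x | x <;> rcases hli : l i with y | y <;>
            simp [hli, hv] at heq <;> subst heq
          · exact h t ht (hli ▸ hm)
          · exact hnc i t ht (by simp [complLit, hli]; exact hm)
          · exact hnc i t ht (by simp [complLit, hli]; exact hm)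
          · exact h t ht (hli ▸ hm)
        have := hσ t ht m hm
        rcases m with x | x <;> simp [satLit] at this ⊢ <;>
          · simp only [hσ']
            rw [if_neg (by simpa using hne)]
            exact this
      have := hent i σ' hΦ
      rcases hli : l i with x | x <;> rw [hli] at this <;>
        simp [satLit, hσ', hv, hb, hli] at this
    choose t htΦ htl using hex
    refine ⟨t, fun i => ⟨hsub (htΦ i), htl i, fun j => hnc j (t i) (htΦ i)⟩, ?_⟩
    intro i j
    exact ⟨σ, by rintro s (rfl | rfl) <;> exact hσ _ (by first | exact htΦ i | exact htΦ j)⟩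
  · rintro ⟨t, hprop, hcons⟩
    refine ⟨Set.range t, ?_, ?_, ?_⟩
    · rintro _ ⟨i, rfl⟩; exact (hprop i).1
    · refine ⟨fun x => if ∃ i, Sum.inl x ∈ t i then true else false, ?_⟩
      rintro _ ⟨i, rfl⟩ m hm
      rcases m with x | x
      · simp only [satLit]
        exact if_pos ⟨i, hm⟩
      · simp only [satLit]
        rw [if_neg]
        rintro ⟨j, hj⟩
        obtain ⟨τ, hτ⟩ := hcons i j
        have h1 := hτ (t i) (by simp) _ hm
        have h2 := hτ (t j) (by simp) _ hj
        simp [satLit] at h1 h2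
        rw [h1] at h2
        exact absurd h2 (by simp)
    · intro i σ0 hσ0
      exact hσ0 (t i) ⟨i, rfl⟩ (l i) (hprop i).2.1
end

section
/- Let r ≥ 1, let Φ be a consistent finite set of r-formulas over V, and let a be an atom (a literal or a positive clause of width at most r) with Φ ⊨ a. Then there exists a subset E ⊆ Φ with |E| ≤ r and E ⊨ a. -/
/-- An `r`-formula: a finite set of literals together with a finite set of
positive clauses (each clause a finite set of variables). -/
abbrev RForm (V : Type) := Finset (Lit V) × Finset (Finset V)

/-- An atom: a literal or a positive clause. -/
abbrev Atom (V : Type) := Lit V ⊕ Finset V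

/-- An assignment satisfies a positive clause if it makes some variable of it true. -/
def satClause {V : Type} (σ : V → Bool) (C : Finset V) : Prop := ∃ x ∈ C, σ x = true

/-- An assignment satisfies an `r`-formula if it satisfies all of its literals
and all of its positive clauses. -/
def satForm {V : Type} (σ : V → Bool) (φ : RForm V) : Prop :=
  (∀ l ∈ φ.1, satLit σ l) ∧ (∀ C ∈ φ.2, satClause σ C)

/-- All positive clauses of the formula are nonempty and of width at most `r`. -/
def IsRForm {V : Type} (r : ℕ) (φ : RForm V) : Prop :=
  ∀ C ∈ φ.2, C.Nonempty ∧ C.card ≤ r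

/-- An assignment satisfies an atom. -/
def satAtom {V : Type} (σ : V → Bool) : Atom V → Prop
  | Sum.inl l => satLit σ l
  | Sum.inr C => satClause σ C

/-- The atom is a literal, or a nonempty positive clause of width at most `r`. -/
def IsRAtom {V : Type} (r : ℕ) : Atom V → Prop
  | Sum.inl _ => True
  | Sum.inr C => C.Nonempty ∧ C.card ≤ r

/-- A set of `r`-formulas is consistent if some assignment satisfies all members. -/
def ConsistentF {V : Type} (Φ : Set (RForm V)) : Prop := ∃ σ, ∀ φ ∈ Φ, satForm σ φ

/-- `Φ ⊨ a`: every assignment satisfying all members of `Φ` satisfies the atom `a`. -/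
def EntailsA {V : Type} (Φ : Set (RForm V)) (a : Atom V) : Prop :=
  ∀ σ, (∀ φ ∈ Φ, satForm σ φ) → satAtom σ a

theorem key_clause {V : Type} (r : ℕ) (hr : 1 ≤ r) (Φ : Finset (RForm V))
    (hΦ : ∀ φ ∈ Φ, IsRForm r φ) (hcons : ConsistentF (↑Φ : Set (RForm V)))
    (C : Finset V)
    (hent : EntailsA (↑Φ : Set (RForm V)) (Sum.inr C)) :
    ∃ E : Finset (RForm V), E ⊆ Φ ∧ E.card ≤ r ∧
      EntailsA (↑E : Set (RForm V)) (Sum.inr C) := by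
  classical
  obtain ⟨σ₀, hσ₀⟩ := hcons
  by_cases h1 : ∃ φ ∈ Φ, ∃ y ∈ C, Sum.inl y ∈ φ.1
  · obtain ⟨φ, hφ, y, hy, hl⟩ := h1
    refine ⟨{φ}, by simpa using hφ, by simpa using hr, ?_⟩
    intro σ hσ
    have := (hσ φ (by simp)).1 _ hl
    exact ⟨y, hy, this⟩
  by_cases h2 : ∃ φ ∈ Φ, ∃ D ∈ φ.2, (D ∩ C).Nonempty ∧
      ∀ y ∈ D \ C, ∃ ψ ∈ Φ, Sum.inr y ∈ ψ.1
  · obtain ⟨φ, hφ, D, hD, ⟨z, hz⟩, hneg⟩ := h2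
    choose f hfΦ hfneg using hneg
    refine ⟨insert φ ((D \ C).attach.image (fun y => f y.1 y.2)), ?_, ?_, ?_⟩
    · intro ψ hψ
      rcases Finset.mem_insert.mp hψ with h | h
      · exact h ▸ hφ
      · obtain ⟨⟨y, hy⟩, _, rfl⟩ := Finset.mem_image.mp h
        exact hfΦ y hy
    · have hsub : D \ C ⊆ D.erase z := by
        intro y hy
        rcases Finset.mem_sdiff.mp hy with ⟨hyD, hyC⟩
        refine Finset.mem_erase.mpr ⟨?_, hyD⟩
        rintro rfl
        exact hyC (Finset.mem_inter.mp hz).2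
      have h3 : (D \ C).card ≤ D.card - 1 := by
        calc (D \ C).card ≤ (D.erase z).card := Finset.card_le_card hsub
          _ = D.card - 1 := Finset.card_erase_of_mem (Finset.mem_inter.mp hz).1
      have h4 : D.card ≤ r := (hΦ φ hφ D hD).2
      have h5 : 1 ≤ D.card := Finset.card_pos.mpr ⟨z, (Finset.mem_inter.mp hz).1⟩
      have h6 := Finset.card_insert_le φ ((D \ C).attach.image (fun y => f y.1 y.2))
      have h7 := Finset.card_image_le (s := (D \ C).attach) (f := fun y => f y.1 y.2)
      have h8 : (D \ C).attach.card = (D \ C).card := Finset.card_attach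
      omega
    · intro σ hσ
      have hφE : satForm σ φ := hσ φ (by simp)
      obtain ⟨w, hwD, hw⟩ := hφE.2 D hD
      by_cases hwC : w ∈ C
      · exact ⟨w, hwC, hw⟩
      · exfalso
        have hwDC : w ∈ D \ C := Finset.mem_sdiff.mpr ⟨hwD, hwC⟩
        have hmem : f w hwDC ∈ (↑(insert φ ((D \ C).attach.image (fun y => f y.1 y.2))) :
            Set (RForm V)) := by
          simp only [Finset.coe_insert, Set.mem_insert_iff, Finset.mem_coe]
          right
          exact Finset.mem_image.mpr ⟨⟨w, hwDC⟩, Finset.mem_attach _ _, rfl⟩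
        have := (hσ _ hmem).1 _ (hfneg w hwDC)
        simp only [satLit] at this
        rw [hw] at this
        exact Bool.noConfusion this
  · exfalso
    let σ : V → Bool := fun v => !decide (v ∈ C ∨ ∃ φ ∈ Φ, Sum.inr v ∈ φ.1)
    have hσtrue : ∀ v, σ v = true ↔ ¬(v ∈ C ∨ ∃ φ ∈ Φ, Sum.inr v ∈ φ.1) := by
      intro v; simp [σ]
    have hsat : ∀ φ ∈ (↑Φ : Set (RForm V)), satForm σ φ := by
      intro φ hφ
      constructor
      · intro l hl
        match l with
        | Sum.inl y =>
          simp only [satLit]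
          rw [hσtrue]
          rintro (hyC | ⟨ψ, hψ, hneg⟩)
          · exact h1 ⟨φ, hφ, y, hyC, hl⟩
          · have ht := (hσ₀ φ hφ).1 _ hl
            have hf := (hσ₀ ψ hψ).1 _ hneg
            simp only [satLit] at ht hf
            rw [ht] at hf
            exact Bool.noConfusion hf
        | Sum.inr y =>
          show (!decide (y ∈ C ∨ ∃ φ ∈ Φ, Sum.inr y ∈ φ.1)) = false
          simp only [Bool.not_eq_false', decide_eq_true_eq]
          exact Or.inr ⟨φ, hφ, hl⟩
      · intro D hD
        by_contra hf
        have hall : ∀ w ∈ D, w ∈ C ∨ ∃ φ ∈ Φ, Sum.inr w ∈ φ.1 := by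
          intro w hw
          by_contra hc
          exact hf ⟨w, hw, (hσtrue w).2 hc⟩
        by_cases hDC : (D ∩ C).Nonempty
        · refine h2 ⟨φ, hφ, D, hD, hDC, fun y hy => ?_⟩
          rcases hall y (Finset.mem_sdiff.mp hy).1 with h | h
          · exact absurd h (Finset.mem_sdiff.mp hy).2
          · exact h
        · obtain ⟨w, hwD, hw⟩ := (hσ₀ φ hφ).2 D hD
          rcases hall w hwD with h | ⟨ψ, hψ, hneg⟩
          · exact hDC ⟨w, Finset.mem_inter.mpr ⟨hwD, h⟩⟩
          · have := (hσ₀ ψ hψ).1 _ hneg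
            simp only [satLit] at this
            rw [hw] at this
            exact Bool.noConfusion this
    obtain ⟨x, hxC, hx⟩ := hent σ hsat
    rw [hσtrue] at hx
    exact hx (Or.inl hxC)

/-- If a consistent finite set `Φ` of `r`-formulas entails an atom `a`, then some
subset of `Φ` of cardinality at most `r` already entails `a`. -/
theorem stmt_8 {V : Type} (r : ℕ) (hr : 1 ≤ r) (Φ : Finset (RForm V))
    (hΦ : ∀ φ ∈ Φ, IsRForm r φ) (hcons : ConsistentF (↑Φ : Set (RForm V)))
    (a : Atom V) (ha : IsRAtom r a) (hent : EntailsA (↑Φ : Set (RForm V)) a) :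
    ∃ E : Finset (RForm V), E ⊆ Φ ∧ E.card ≤ r ∧
      EntailsA (↑E : Set (RForm V)) a := by
  classical
  match a with
  | Sum.inl (Sum.inl x) =>
    -- positive literal: reduce to the singleton clause {x}
    have hent' : EntailsA (↑Φ : Set (RForm V)) (Sum.inr ({x} : Finset V)) := by
      intro σ hσ
      have := hent σ hσ
      simp only [satAtom, satLit] at this
      exact ⟨x, Finset.mem_singleton_self x, this⟩
    obtain ⟨E, hE, hcard, hEent⟩ := key_clause r hr Φ hΦ hcons {x} hent'
    refine ⟨E, hE, hcard, ?_⟩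
    intro σ hσ
    obtain ⟨y, hy, hyt⟩ := hEent σ hσ
    rw [Finset.mem_singleton] at hy
    subst hy
    exact hyt
  | Sum.inl (Sum.inr x) =>
    -- negative literal
    by_cases h : ∃ φ ∈ Φ, Sum.inr x ∈ φ.1
    · obtain ⟨φ, hφ, hl⟩ := h
      refine ⟨{φ}, by simpa using hφ, by simpa using hr, ?_⟩
      intro σ hσ
      exact (hσ φ (by simp)).1 _ hl
    · exfalso
      obtain ⟨σ₀, hσ₀⟩ := hcons
      let σ : V → Bool := fun v => if v = x then true else σ₀ v
      have hsat : ∀ φ ∈ (↑Φ : Set (RForm V)), satForm σ φ := by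
        intro φ hφ
        constructor
        · intro l hl
          match l with
          | Sum.inl y =>
            have := (hσ₀ φ hφ).1 _ hl
            simp only [satLit] at this ⊢
            by_cases hy : y = x <;> simp [σ, hy, this]
          | Sum.inr y =>
            have hy : y ≠ x := fun hyx => h ⟨φ, hφ, hyx ▸ hl⟩
            have := (hσ₀ φ hφ).1 _ hl
            simp only [satLit] at this ⊢
            simp [σ, hy, this]
        · intro D hD
          obtain ⟨w, hwD, hw⟩ := (hσ₀ φ hφ).2 D hD
          refine ⟨w, hwD, ?_⟩
          by_cases hwx : w = x <;> simp [σ, hwx, hw]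
      have := hent σ hsat
      simp only [satAtom, satLit, σ, if_pos rfl] at this
      exact Bool.noConfusion this
  | Sum.inr C =>
    exact key_clause r hr Φ hΦ hcons C hent
end

section
/- Let r ≥ 1, let Δ be a set of r-formulas over V, and let a_1, …, a_k be atoms (each a literal or a positive clause of width at most r). Then there exists a consistent subset Φ ⊆ Δ with Φ ⊨ a_i for every i = 1, …, k if and only if there exists such a subset of cardinality at most r·k. -/
open Classical in
/-- The maximal candidate assignment: true unless some formula in `Φ` contains `¬v`. -/
noncomputable def tauA {V : Type} (Φ : Set (RForm V)) : V → Bool :=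
  fun v => if ∃ φ ∈ Φ, Sum.inr v ∈ φ.1 then false else true

lemma tauA_false_iff {V : Type} (Φ : Set (RForm V)) (v : V) :
    tauA Φ v = false ↔ ∃ φ ∈ Φ, Sum.inr v ∈ φ.1 := by
  by_cases h : ∃ φ ∈ Φ, Sum.inr v ∈ φ.1 <;> simp [tauA, h]

lemma tauA_sat {V : Type} (Φ : Set (RForm V)) (σ₀ : V → Bool)
    (h₀ : ∀ φ ∈ Φ, satForm σ₀ φ) : ∀ φ ∈ Φ, satForm (tauA Φ) φ := by
  have mono : ∀ v, σ₀ v = true → tauA Φ v = true := by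
    intro v hv
    cases ht : tauA Φ v with
    | true => rfl
    | false =>
      obtain ⟨φ, hφ, hmem⟩ := (tauA_false_iff Φ v).1 ht
      have := (h₀ φ hφ).1 _ hmem
      simp only [satLit] at this
      rw [hv] at this; exact absurd this (by simp)
  intro φ hφ
  constructor
  · intro l hl
    cases l with
    | inl x => exact mono x ((h₀ φ hφ).1 _ hl)
    | inr x => exact (tauA_false_iff Φ x).2 ⟨φ, hφ, hl⟩
  · intro C hC
    obtain ⟨x, hx, hxt⟩ := (h₀ φ hφ).2 C hC
    exact ⟨x, hx, mono x hxt⟩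

/-- Key lemma for positive clauses: entailment of a clause is witnessed by at most
`r` formulas. -/
lemma key_clause_s9 {V : Type} (r : ℕ) (hr : 1 ≤ r) (Φ : Set (RForm V))
    (hΦr : ∀ φ ∈ Φ, IsRForm r φ) (σ₀ : V → Bool) (h₀ : ∀ φ ∈ Φ, satForm σ₀ φ)
    (D : Finset V)
    (hent : ∀ σ, (∀ φ ∈ Φ, satForm σ φ) → satClause σ D) :
    ∃ Φ' : Finset (RForm V), (↑Φ' : Set (RForm V)) ⊆ Φ ∧ Φ'.card ≤ r ∧
      ∀ σ, (∀ φ ∈ Φ', satForm σ φ) → satClause σ D := by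
  classical
  have hτ := tauA_sat Φ σ₀ h₀
  set τ := tauA Φ with hτdef
  set τ' : V → Bool := fun v => if v ∈ D then false else τ v with hτ'def
  have hτ'D : ∀ v ∈ D, τ' v = false := by intro v hv; simp [hτ'def, hv]
  have hτ'n : ∀ v, v ∉ D → τ' v = τ v := by intro v hv; simp [hτ'def, hv]
  have hfail : ¬ ∀ φ ∈ Φ, satForm τ' φ := by
    intro h
    obtain ⟨x, hx, hxt⟩ := hent τ' h
    rw [hτ'D x hx] at hxt; exact absurd hxt (by simp)
  push_neg at hfail
  obtain ⟨φ, hφ, hφfail⟩ := hfail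
  rw [satForm, not_and_or] at hφfail
  rcases hφfail with hlit | hcl
  · push_neg at hlit
    obtain ⟨l, hl, hlf⟩ := hlit
    cases l with
    | inl x =>
      -- positive literal x in φ fails under τ'; so x ∈ D
      have hx : x ∈ D := by
        by_contra hxD
        have : τ x = true := (hτ φ hφ).1 _ hl
        exact hlf (by simpa [satLit, hτ'n x hxD] using this)
      refine ⟨{φ}, by simpa using hφ, by simpa using hr, ?_⟩
      intro σ h
      exact ⟨x, hx, (h φ (Finset.mem_singleton_self φ)).1 _ hl⟩
    | inr x =>
      -- negative literal can't fail under τ'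
      exfalso
      have hτx : τ x = false := (hτ φ hφ).1 _ hl
      apply hlf
      show τ' x = false
      by_cases hxD : x ∈ D
      · exact hτ'D x hxD
      · rw [hτ'n x hxD]; exact hτx
  · push_neg at hcl
    obtain ⟨C, hC, hCf⟩ := hcl
    have hCfalse : ∀ v ∈ C, τ' v = false := by
      intro v hv
      cases h : τ' v with
      | false => rfl
      | true => exact absurd ⟨v, hv, h⟩ hCf
    obtain ⟨v₀, hv₀C, hv₀⟩ := (hτ φ hφ).2 C hC
    have hv₀D : v₀ ∈ D := by
      by_contra h
      have h2 := hCfalse v₀ hv₀C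
      rw [hτ'n v₀ h, hv₀] at h2
      exact absurd h2 (by simp)
    set g : V → RForm V := fun v =>
      if h : ∃ ψ ∈ Φ, Sum.inr v ∈ ψ.1 then h.choose else φ with hgdef
    have hg : ∀ v ∈ C \ D, g v ∈ Φ ∧ Sum.inr v ∈ (g v).1 := by
      intro v hv
      rw [Finset.mem_sdiff] at hv
      have hτv : τ v = false := by
        rw [← hτ'n v hv.2]; exact hCfalse v hv.1
      have hex : ∃ ψ ∈ Φ, Sum.inr v ∈ ψ.1 := (tauA_false_iff Φ v).1 hτv
      simp only [hgdef, dif_pos hex]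
      obtain ⟨h1, h2⟩ := hex.choose_spec
      exact ⟨h1, h2⟩
    refine ⟨insert φ ((C \ D).image g), ?_, ?_, ?_⟩
    · intro ψ hψ
      simp only [Finset.coe_insert, Set.mem_insert_iff, Finset.coe_image,
        Set.mem_image, Finset.mem_coe] at hψ
      rcases hψ with rfl | ⟨v, hv, rfl⟩
      · exact hφ
      · exact (hg v hv).1
    · calc (insert φ ((C \ D).image g)).card
          ≤ ((C \ D).image g).card + 1 := Finset.card_insert_le _ _
        _ ≤ (C \ D).card + 1 := by
            have := Finset.card_image_le (s := C \ D) (f := g); omega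
        _ ≤ (C.erase v₀).card + 1 := by
            have : C \ D ⊆ C.erase v₀ := by
              intro v hv
              rw [Finset.mem_sdiff] at hv
              rw [Finset.mem_erase]
              exact ⟨fun h => hv.2 (h ▸ hv₀D), hv.1⟩
            have := Finset.card_le_card this; omega
        _ ≤ r := by
            have h1 : (C.erase v₀).card = C.card - 1 := Finset.card_erase_of_mem hv₀C
            have h2 : C.card ≤ r := ((hΦr φ hφ) C hC).2
            have h3 : 1 ≤ C.card := Finset.card_pos.mpr ⟨v₀, hv₀C⟩
            omega
    · intro σ h
      have hσφ : satForm σ φ := h φ (Finset.mem_insert_self _ _)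
      obtain ⟨v, hvC, hv⟩ := hσφ.2 C hC
      by_cases hvD : v ∈ D
      · exact ⟨v, hvD, hv⟩
      · exfalso
        have hvCD : v ∈ C \ D := Finset.mem_sdiff.mpr ⟨hvC, hvD⟩
        have hgv := hg v hvCD
        have : satForm σ (g v) := h (g v)
          (Finset.mem_insert_of_mem (Finset.mem_image_of_mem g hvCD))
        have := this.1 _ hgv.2
        simp only [satLit] at this
        rw [hv] at this; exact absurd this (by simp)

/-- Key lemma: entailment of an `r`-atom from a consistent set is witnessed by at
most `r` formulas. -/
lemma key_atom {V : Type} (r : ℕ) (hr : 1 ≤ r) (Φ : Set (RForm V))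
    (hΦr : ∀ φ ∈ Φ, IsRForm r φ) (σ₀ : V → Bool) (h₀ : ∀ φ ∈ Φ, satForm σ₀ φ)
    (a : Atom V) (ha : IsRAtom r a) (hent : EntailsA Φ a) :
    ∃ Φ' : Finset (RForm V), (↑Φ' : Set (RForm V)) ⊆ Φ ∧ Φ'.card ≤ r ∧
      EntailsA (↑Φ' : Set (RForm V)) a := by
  classical
  cases a with
  | inl l =>
    cases l with
    | inl x =>
      obtain ⟨Φ', h1, h2, h3⟩ := key_clause_s9 r hr Φ hΦr σ₀ h₀ {x}
        (fun σ h => ⟨x, Finset.mem_singleton_self x, hent σ h⟩)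
      refine ⟨Φ', h1, h2, ?_⟩
      intro σ h
      obtain ⟨y, hy, hyt⟩ := h3 σ (fun φ hφ => h φ (Finset.mem_coe.mpr hφ))
      rw [Finset.mem_singleton] at hy
      subst hy
      exact hyt
    | inr x =>
      have hτ := tauA_sat Φ σ₀ h₀
      have hfx : tauA Φ x = false := hent (tauA Φ) hτ
      obtain ⟨φ, hφ, hmem⟩ := (tauA_false_iff Φ x).1 hfx
      refine ⟨{φ}, by simpa using hφ, by simpa using hr, ?_⟩
      intro σ h
      exact (h φ (by simp)).1 _ hmem
  | inr D =>
    obtain ⟨Φ', h1, h2, h3⟩ := key_clause_s9 r hr Φ hΦr σ₀ h₀ D (fun σ h => hent σ h)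
    exact ⟨Φ', h1, h2, fun σ h => h3 σ (fun φ hφ => h φ (Finset.mem_coe.mpr hφ))⟩

/-- There is a consistent subset of `Δ` entailing each atom `a i` iff there is
one of cardinality at most `r * k`. -/
theorem stmt_9 {V : Type} (r : ℕ) (hr : 1 ≤ r) (Δ : Set (RForm V))
    (hΔ : ∀ φ ∈ Δ, IsRForm r φ) (k : ℕ) (a : Fin k → Atom V)
    (ha : ∀ i, IsRAtom r (a i)) :
    (∃ Φ : Set (RForm V), Φ ⊆ Δ ∧ ConsistentF Φ ∧ ∀ i, EntailsA Φ (a i)) ↔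
    (∃ Φ : Finset (RForm V), (↑Φ : Set (RForm V)) ⊆ Δ ∧ Φ.card ≤ r * k ∧
      ConsistentF (↑Φ : Set (RForm V)) ∧
      ∀ i, EntailsA (↑Φ : Set (RForm V)) (a i)) := by
  classical
  constructor
  · rintro ⟨Φ, hΦΔ, ⟨σ₀, h₀⟩, hentall⟩
    have hΦr : ∀ φ ∈ Φ, IsRForm r φ := fun φ hφ => hΔ φ (hΦΔ hφ)
    choose Φ' h1 h2 h3 using fun i =>
      key_atom r hr Φ hΦr σ₀ h₀ (a i) (ha i) (hentall i)
    refine ⟨Finset.univ.biUnion Φ', ?_, ?_, ?_, ?_⟩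
    · intro ψ hψ
      rw [Finset.mem_coe, Finset.mem_biUnion] at hψ
      obtain ⟨i, _, hi⟩ := hψ
      exact hΦΔ (h1 i hi)
    · calc (Finset.univ.biUnion Φ').card
          ≤ ∑ i : Fin k, (Φ' i).card := Finset.card_biUnion_le
        _ ≤ ∑ _i : Fin k, r := Finset.sum_le_sum (fun i _ => h2 i)
        _ = r * k := by simp [mul_comm]
    · refine ⟨σ₀, fun φ hφ => ?_⟩
      rw [Finset.mem_coe, Finset.mem_biUnion] at hφ
      obtain ⟨i, _, hi⟩ := hφ
      exact h₀ φ (h1 i hi)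
    · intro i σ hσ
      exact h3 i σ (fun φ hφ => hσ φ
        (Finset.mem_coe.mpr (Finset.mem_biUnion.mpr ⟨i, Finset.mem_univ i, hφ⟩)))
  · rintro ⟨Φ, h1, _, h3, h4⟩
    exact ⟨↑Φ, h1, h3, h4⟩
end

section
/- Let r ≥ 1 and let Φ be a finite set of r-formulas over V. If every subset of Φ of cardinality at most r + 1 is consistent, then Φ is consistent. Contrapositively, if Φ is inconsistent then it contains an inconsistent subset of cardinality at most r + 1. -/
/-- If every subset of `Φ` of cardinality at most `r + 1` is consistent, then
`Φ` is consistent; contrapositively, an inconsistent `Φ` contains an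
inconsistent subset of cardinality at most `r + 1`. -/
theorem stmt_10 {V : Type} (r : ℕ) (hr : 1 ≤ r) (Φ : Finset (RForm V))
    (hΦ : ∀ φ ∈ Φ, IsRForm r φ) :
    ((∀ S : Finset (RForm V), S ⊆ Φ → S.card ≤ r + 1 →
        ConsistentF (↑S : Set (RForm V))) → ConsistentF (↑Φ : Set (RForm V))) ∧
    (¬ ConsistentF (↑Φ : Set (RForm V)) →
      ∃ S : Finset (RForm V), S ⊆ Φ ∧ S.card ≤ r + 1 ∧
        ¬ ConsistentF (↑S : Set (RForm V))) := by
  classical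
  have key : (∀ S : Finset (RForm V), S ⊆ Φ → S.card ≤ r + 1 →
      ConsistentF (↑S : Set (RForm V))) → ConsistentF (↑Φ : Set (RForm V)) := by
    intro H
    set σ : V → Bool := fun x => if ∃ ψ ∈ Φ, Sum.inr x ∈ ψ.1 then false else true with hσ
    have hσfalse : ∀ x, σ x = false → ∃ ψ ∈ Φ, Sum.inr x ∈ ψ.1 := by
      intro x hx
      by_contra h
      simp only [hσ, if_neg h] at hx
      exact Bool.noConfusion hx
    have hσneg : ∀ x, (∃ ψ ∈ Φ, Sum.inr x ∈ ψ.1) → σ x = false := by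
      intro x hx; simp only [hσ, if_pos hx]
    by_cases hsat : ∀ φ ∈ (↑Φ : Set (RForm V)), satForm σ φ
    · exact ⟨σ, hsat⟩
    · push_neg at hsat
      obtain ⟨φ, hφΦ', hφ⟩ := hsat
      have hφΦ : φ ∈ Φ := hφΦ'
      exfalso
      by_cases hlit : ∀ l ∈ φ.1, satLit σ l
      · have hcl : ¬ ∀ C ∈ φ.2, satClause σ C := fun h => hφ ⟨hlit, h⟩
        push_neg at hcl
        obtain ⟨C, hC, hCs⟩ := hcl
        have hall : ∀ x ∈ C, ∃ ψ ∈ Φ, Sum.inr x ∈ ψ.1 := by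
          intro x hx
          apply hσfalse
          cases hb : σ x with
          | true => exact absurd ⟨x, hx, hb⟩ hCs
          | false => rfl
        let f : V → RForm V := fun x =>
          if h : ∃ ψ ∈ Φ, Sum.inr x ∈ ψ.1 then h.choose else φ
        have hf : ∀ x ∈ C, f x ∈ Φ ∧ Sum.inr x ∈ (f x).1 := by
          intro x hx
          have h := hall x hx
          simp only [f, dif_pos h]
          exact ⟨h.choose_spec.1, h.choose_spec.2⟩
        set S : Finset (RForm V) := insert φ (C.image f) with hS
        have hSsub : S ⊆ Φ := by
          intro ψ hψ
          rw [hS, Finset.mem_insert] at hψ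
          rcases hψ with h | h
          · exact h ▸ hφΦ
          · obtain ⟨x, hx, hfx⟩ := Finset.mem_image.mp h
            exact hfx ▸ (hf x hx).1
        have hScard : S.card ≤ r + 1 := by
          have h1 := Finset.card_insert_le φ (C.image f)
          have h2 := Finset.card_image_le (s := C) (f := f)
          have h3 := (hΦ φ hφΦ C hC).2
          rw [hS]
          omega
        obtain ⟨τ, hτ⟩ := H S hSsub hScard
        have hτφ : satForm τ φ := hτ φ (by simp [hS])
        obtain ⟨x, hx, hxt⟩ := hτφ.2 C hC
        have hτf : satForm τ (f x) := hτ (f x)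
          (by rw [hS]; exact Finset.mem_coe.mpr (Finset.mem_insert_of_mem
            (Finset.mem_image_of_mem f hx)))
        have hfalse : τ x = false := hτf.1 (Sum.inr x) (hf x hx).2
        rw [hxt] at hfalse
        exact Bool.noConfusion hfalse
      · push_neg at hlit
        obtain ⟨l, hl, hls⟩ := hlit
        cases l with
        | inl x =>
          have hxf : σ x = false := by
            cases hb : σ x with
            | true => exact absurd hb hls
            | false => rfl
          obtain ⟨ψ, hψΦ, hψx⟩ := hσfalse x hxf
          obtain ⟨τ, hτ⟩ := H {φ, ψ} (by
              intro a ha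
              rcases Finset.mem_insert.mp ha with h | h
              · exact h ▸ hφΦ
              · exact (Finset.mem_singleton.mp h) ▸ hψΦ)
            (le_trans (Finset.card_insert_le _ _) (by simp; omega))
          have h1 : τ x = true := (hτ φ (by simp)).1 (Sum.inl x) hl
          have h2 : τ x = false := (hτ ψ (by simp)).1 (Sum.inr x) hψx
          rw [h1] at h2
          exact Bool.noConfusion h2
        | inr x =>
          exact hls (hσneg x ⟨φ, hφΦ, hl⟩)
  refine ⟨key, ?_⟩
  intro hnc
  by_contra h
  push_neg at h
  exact hnc (key fun S hS hc => h S hS hc)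
end

section
/- Let r ≥ 1, let Δ be a finite set of r-formulas over V, and let a_1, …, a_k be atoms (each a literal or a positive clause of width at most r). Then there exists a consistent subset Φ ⊆ Δ with Φ ⊨ a_i for every i = 1, …, k if and only if there exist subsets S_1, …, S_k ⊆ Δ such that |S_i| ≤ r and S_i ⊨ a_i for every i, and the union S_1 ∪ … ∪ S_k is consistent. -/
-- key clause lemma
lemma keyClause {V : Type} (r : ℕ) (hr : 1 ≤ r) (Φ : Finset (RForm V))
    (hΦ : ∀ φ ∈ Φ, IsRForm r φ) (σ0 : V → Bool) (hσ0 : ∀ φ ∈ Φ, satForm σ0 φ)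
    (A : Finset V)
    (hent : ∀ σ : V → Bool, (∀ φ ∈ Φ, satForm σ φ) → satClause σ A) :
    ∃ S : Finset (RForm V), S ⊆ Φ ∧ S.card ≤ r ∧
      ∀ σ : V → Bool, (∀ φ ∈ S, satForm σ φ) → satClause σ A := by
  classical
  set N : Set V := {v | ∃ φ ∈ Φ, Sum.inr v ∈ φ.1} with hN
  have σ0N : ∀ v ∈ N, σ0 v = false := by
    rintro v ⟨φ, hφ, hl⟩
    exact (hσ0 φ hφ).1 _ hl
  set τ : V → Bool := fun v => if v ∈ N ∨ v ∈ A then false else true with hτdef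
  by_cases hτ : ∀ φ ∈ Φ, satForm τ φ
  · exfalso
    obtain ⟨x, hxA, hx⟩ := hent τ hτ
    simp [hτdef, hxA] at hx
  · push_neg at hτ
    obtain ⟨φ0, hφ0, hbad⟩ := hτ
    rw [satForm, not_and_or] at hbad
    rcases hbad with hbad | hbad
    · push_neg at hbad
      obtain ⟨l, hl, hlbad⟩ := hbad
      match l with
      | Sum.inl v =>
        have hτv : τ v = false := by
          cases h : τ v with
          | false => rfl
          | true => exact absurd h hlbad
        have hvNA : v ∈ N ∨ v ∈ A := by
          by_contra hc
          push_neg at hc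
          simp [hτdef, hc.1, hc.2] at hτv
        rcases hvNA with hvN | hvA
        · exfalso
          have h1 : σ0 v = true := (hσ0 φ0 hφ0).1 _ hl
          rw [σ0N v hvN] at h1
          exact Bool.false_ne_true h1
        · refine ⟨{φ0}, by simpa using hφ0, by simpa using hr, ?_⟩
          intro σ hσ
          exact ⟨v, hvA, (hσ φ0 (Finset.mem_singleton_self φ0)).1 _ hl⟩
      | Sum.inr v =>
        exfalso
        have hvN : v ∈ N := ⟨φ0, hφ0, hl⟩
        exact hlbad (by simp [satLit, hτdef, hvN])
    · push_neg at hbad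
      obtain ⟨C, hC, hCbad⟩ := hbad
      have hCsub : ∀ v ∈ C, v ∈ N ∨ v ∈ A := by
        intro v hv
        by_contra hc
        push_neg at hc
        exact hCbad ⟨v, hv, by simp [hτdef, hc.1, hc.2]⟩
      obtain ⟨w, hwC, hw⟩ := (hσ0 φ0 hφ0).2 C hC
      have hwN : w ∉ N := fun h => by rw [σ0N w h] at hw; exact Bool.false_ne_true hw
      set F : Finset V := C.filter (fun v => v ∈ N) with hF
      have hgex : ∀ v ∈ N, ∃ ψ, ψ ∈ Φ ∧ Sum.inr v ∈ ψ.1 := by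
        intro v hv
        obtain ⟨ψ, h1, h2⟩ := hv
        exact ⟨ψ, h1, h2⟩
      set g : V → RForm V := fun v => if h : v ∈ N then (hgex v h).choose else φ0 with hg
      have hgΦ : ∀ v ∈ N, g v ∈ Φ ∧ Sum.inr v ∈ (g v).1 := by
        intro v hv
        simp only [hg, dif_pos hv]
        exact (hgex v hv).choose_spec
      refine ⟨insert φ0 (F.image g), ?_, ?_, ?_⟩
      · intro ψ hψ
        rcases Finset.mem_insert.mp hψ with h | h
        · exact h ▸ hφ0
        · obtain ⟨v, hvF, rfl⟩ := Finset.mem_image.mp h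
          exact (hgΦ v (Finset.mem_filter.mp hvF).2).1
      · have h1 : F ⊆ C.erase w := by
          intro v hv
          obtain ⟨hvC, hvN⟩ := Finset.mem_filter.mp hv
          exact Finset.mem_erase.mpr ⟨fun h => hwN (h ▸ hvN), hvC⟩
        have h2 : F.card ≤ C.card - 1 := by
          calc F.card ≤ (C.erase w).card := Finset.card_le_card h1
          _ = C.card - 1 := Finset.card_erase_of_mem hwC
        have h3 : C.card ≤ r := (hΦ φ0 hφ0 C hC).2
        have h4 : 1 ≤ C.card := Finset.card_pos.mpr ⟨w, hwC⟩
        calc (insert φ0 (F.image g)).card ≤ (F.image g).card + 1 :=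
              Finset.card_insert_le _ _
          _ ≤ F.card + 1 := by
              exact Nat.add_le_add_right (Finset.card_image_le) 1
          _ ≤ r := by omega
      · intro σ hσ
        obtain ⟨u, huC, hu⟩ := (hσ φ0 (Finset.mem_insert_self _ _)).2 C hC
        by_cases huN : u ∈ N
        · exfalso
          have huF : u ∈ F := Finset.mem_filter.mpr ⟨huC, huN⟩
          have : g u ∈ insert φ0 (F.image g) :=
            Finset.mem_insert_of_mem (Finset.mem_image_of_mem g huF)
          have := (hσ (g u) this).1 _ (hgΦ u huN).2
          rw [satLit] at this
          rw [this] at hu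
          exact Bool.false_ne_true hu
        · rcases hCsub u huC with h | h
          · exact absurd h huN
          · exact ⟨u, h, hu⟩

lemma keyNeg {V : Type} (Φ : Finset (RForm V)) (σ0 : V → Bool)
    (hσ0 : ∀ φ ∈ Φ, satForm σ0 φ) (x : V)
    (hent : ∀ σ : V → Bool, (∀ φ ∈ Φ, satForm σ φ) → σ x = false) :
    ∃ φ ∈ Φ, Sum.inr x ∈ φ.1 := by
  classical
  set N : Set V := {v | ∃ φ ∈ Φ, Sum.inr v ∈ φ.1} with hN
  have σ0N : ∀ v ∈ N, σ0 v = false := by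
    rintro v ⟨φ, hφ, hl⟩
    exact (hσ0 φ hφ).1 _ hl
  set τ : V → Bool := fun v => if v ∈ N then false else true with hτdef
  have hτΦ : ∀ φ ∈ Φ, satForm τ φ := by
    intro φ hφ
    constructor
    · intro l hl
      match l with
      | Sum.inl v =>
        have h1 : σ0 v = true := (hσ0 φ hφ).1 _ hl
        have hvN : v ∉ N := fun h => by rw [σ0N v h] at h1; exact Bool.false_ne_true h1
        simp [satLit, hτdef, hvN]
      | Sum.inr v =>
        have hvN : v ∈ N := ⟨φ, hφ, hl⟩
        simp [satLit, hτdef, hvN]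
    · intro C hC
      obtain ⟨w, hwC, hw⟩ := (hσ0 φ hφ).2 C hC
      have hwN : w ∉ N := fun h => by rw [σ0N w h] at hw; exact Bool.false_ne_true hw
      exact ⟨w, hwC, by simp [hτdef, hwN]⟩
  have hx : τ x = false := hent τ hτΦ
  have hxN : x ∈ N := by
    by_contra h
    simp [hτdef, h] at hx
  exact hxN

/-- There is a consistent subset of `Δ` entailing every atom `a i` iff there
are subsets `S i ⊆ Δ` with `|S i| ≤ r` and `S i ⊨ a i` for every `i`, whose
union is consistent. -/
theorem stmt_11 {V : Type} (r : ℕ) (hr : 1 ≤ r) (Δ : Finset (RForm V))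
    (hΔ : ∀ φ ∈ Δ, IsRForm r φ) (k : ℕ) (a : Fin k → Atom V)
    (ha : ∀ i, IsRAtom r (a i)) :
    (∃ Φ : Finset (RForm V), Φ ⊆ Δ ∧ ConsistentF (↑Φ : Set (RForm V)) ∧
      ∀ i, EntailsA (↑Φ : Set (RForm V)) (a i)) ↔
    (∃ S : Fin k → Finset (RForm V),
      (∀ i, S i ⊆ Δ ∧ (S i).card ≤ r ∧ EntailsA (↑(S i) : Set (RForm V)) (a i)) ∧
      ConsistentF (⋃ i, (↑(S i) : Set (RForm V)))) := by
  classical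
  constructor
  · rintro ⟨Φ, hΦΔ, ⟨σ0, hσ0⟩, hent⟩
    have hσ0' : ∀ φ ∈ Φ, satForm σ0 φ := fun φ h => hσ0 φ (Finset.mem_coe.mpr h)
    have hΦr : ∀ φ ∈ Φ, IsRForm r φ := fun φ h => hΔ φ (hΦΔ h)
    have key : ∀ b : Atom V, EntailsA (↑Φ : Set (RForm V)) b →
        ∃ S : Finset (RForm V), S ⊆ Φ ∧ S.card ≤ r ∧ EntailsA (↑S : Set (RForm V)) b := by
      intro b hb
      match b with
      | Sum.inl (Sum.inl x) =>
        obtain ⟨S, h1, h2, h3⟩ := keyClause r hr Φ hΦr σ0 hσ0' {x} (fun σ hσ => by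
          have := hb σ (fun φ h => hσ φ (Finset.mem_coe.mp h))
          exact ⟨x, Finset.mem_singleton_self x, this⟩)
        refine ⟨S, h1, h2, ?_⟩
        intro σ hσ
        obtain ⟨y, hy, hy'⟩ := h3 σ (fun φ h => hσ φ (Finset.mem_coe.mpr h))
        rw [Finset.mem_singleton] at hy
        subst hy
        exact hy'
      | Sum.inl (Sum.inr x) =>
        obtain ⟨φ, hφ, hl⟩ := keyNeg Φ σ0 hσ0' x
          (fun σ hσ => hb σ (fun ψ h => hσ ψ (Finset.mem_coe.mp h)))
        refine ⟨{φ}, by simpa using hφ, by simpa using hr, ?_⟩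
        intro σ hσ
        exact (hσ φ (by simp)).1 _ hl
      | Sum.inr C =>
        obtain ⟨S, h1, h2, h3⟩ := keyClause r hr Φ hΦr σ0 hσ0' C
          (fun σ hσ => hb σ (fun ψ h => hσ ψ (Finset.mem_coe.mp h)))
        exact ⟨S, h1, h2, fun σ hσ => h3 σ (fun ψ h => hσ ψ (Finset.mem_coe.mpr h))⟩
    choose S hsub hcard hentS using fun i => key (a i) (hent i)
    refine ⟨S, fun i => ⟨(hsub i).trans hΦΔ, hcard i, hentS i⟩, σ0, ?_⟩
    intro φ hφ
    obtain ⟨i, hφi⟩ := Set.mem_iUnion.mp hφ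
    exact hσ0' φ (hsub i (Finset.mem_coe.mp hφi))
  · rintro ⟨S, hS, ⟨σ, hσ⟩⟩
    refine ⟨Finset.univ.biUnion S, ?_, ⟨σ, ?_⟩, ?_⟩
    · intro φ hφ
      obtain ⟨i, _, h⟩ := Finset.mem_biUnion.mp hφ
      exact (hS i).1 h
    · intro φ hφ
      obtain ⟨i, _, h⟩ := Finset.mem_biUnion.mp (Finset.mem_coe.mp hφ)
      exact hσ φ (Set.mem_iUnion.mpr ⟨i, Finset.mem_coe.mpr h⟩)
    · intro i σ' hσ'
      exact (hS i).2.2 σ' (fun ψ hψ => hσ' ψ (Finset.mem_coe.mpr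
        (Finset.mem_biUnion.mpr ⟨i, Finset.mem_univ i, Finset.mem_coe.mp hψ⟩)))
end

section
/- Let V be a finite type, let k ∈ ℕ, and let φ be a formula over V with the property that if φ is satisfiable then φ has a model of weight at most k. Consider the variable type V ⊕ Fin (k+1) with k + 1 fresh variables, and the formula ψ over V ⊕ Fin (k+1) satisfied by an assignment τ if and only if φ is satisfied by τ ∘ inl and τ(inr j) = true for at least one j ∈ Fin (k+1) (i.e., ψ = φ ∧ (x_1 ∨ … ∨ x_{k+1}) for fresh variables x_1, …, x_{k+1}). Then φ is satisfiable if and only if ψ has a model of weight exactly k + 1. -/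
/-- The weight of an assignment over a finite variable type: the number of
variables mapped to true. -/
def weight {W : Type} [Fintype W] (σ : W → Bool) : ℕ :=
  (Finset.univ.filter fun v => σ v = true).card

lemma weight_eq_card {W : Type} [Fintype W] (σ : W → Bool) :
    weight σ = Fintype.card {v // σ v = true} := by
  rw [weight, Fintype.card_subtype]

lemma weight_elim {V W : Type} [Fintype V] [Fintype W] (σ : V → Bool) (ρ : W → Bool) :
    weight (Sum.elim σ ρ) = weight σ + weight ρ := by
  rw [weight_eq_card, weight_eq_card, weight_eq_card,
    Fintype.card_congr (Equiv.subtypeSum (p := fun x => Sum.elim σ ρ x = true)),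
    Fintype.card_sum]
  rfl

/-- If a satisfiable `φ` always has a model of weight at most `k`, then `φ` is
satisfiable iff `φ ∧ (x_1 ∨ … ∨ x_{k+1})`, with `k + 1` fresh variables, has a
model of weight exactly `k + 1`. -/
theorem stmt_15 {V : Type} [Fintype V] (k : ℕ) (φ : (V → Bool) → Prop)
    (hφ : (∃ σ, φ σ) → ∃ σ, φ σ ∧ weight σ ≤ k) :
    (∃ σ, φ σ) ↔
    ∃ τ : (V ⊕ Fin (k + 1)) → Bool,
      (φ (τ ∘ Sum.inl) ∧ ∃ j : Fin (k + 1), τ (Sum.inr j) = true) ∧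
      weight τ = k + 1 := by
  constructor
  · intro h
    obtain ⟨σ, hσ, hw⟩ := hφ h
    set w := weight σ with hwdef
    refine ⟨Sum.elim σ (fun j => decide (w ≤ j.val)), ⟨?_, ⟨⟨k, Nat.lt_succ_self k⟩, by
      simp; omega⟩⟩, ?_⟩
    · simpa using hσ
    · rw [weight_elim]
      have : weight (fun j : Fin (k + 1) => decide (w ≤ j.val)) = k + 1 - w := by
        rw [weight]
        have : (Finset.univ.filter fun j : Fin (k + 1) => (decide (w ≤ j.val)) = true)
            = Finset.Ici (⟨w, by omega⟩ : Fin (k + 1)) := by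
          ext j
          simp [Fin.le_def]
        rw [this, Fin.card_Ici]
      rw [this]; omega
  · rintro ⟨τ, ⟨h1, _⟩, _⟩
    exact ⟨τ ∘ Sum.inl, h1⟩
end
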